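/- Let λ ≥ 3 and k ≥ 3 be integers and let k', h be positive integers with h ≥ 1. Then λ^m − 1 ≠ ((λ^k+1)^{k'(λ+2)} − 1)/((λ^k+1)^{k'} − 1) for every m, because the right-hand side is congruent to λ + 2 modulo λ^k while the left-hand side is congruent to −1 modulo λ^k. -/
import Mathlib

lemma geom_nat (y : ℕ) (hy : 1 ≤ y) (n : ℕ) :
    (y - 1) * ∑ j ∈ Finset.range n, y ^ j = y ^ n - 1 := by
  induction n with
  | zero => simp
  | succ n ih =>
    rw [Finset.sum_range_succ, Nat.mul_add, ih, Nat.sub_mul, one_mul]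
    have h1 : 1 ≤ y ^ n := Nat.one_le_pow _ _ hy
    have h2 : y ^ n ≤ y * y ^ n := Nat.le_mul_of_pos_left _ hy
    rw [pow_succ, mul_comm (y ^ n) y]
    omega

/-- For integers `λ ≥ 3`, `k ≥ 3` and positive integers `k'`, `h`, one has
`λ^m − 1 ≠ ((λ^k+1)^{k'(λ+2)} − 1)/((λ^k+1)^{k'} − 1)` for every `m`. -/
theorem stmt_16 (lam k k' h m : ℕ) (hlam : 3 ≤ lam) (hk : 3 ≤ k)
    (hk' : 1 ≤ k') (hh : 1 ≤ h) :
    lam ^ m - 1 ≠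
      ((lam ^ k + 1) ^ (k' * (lam + 2)) - 1) / ((lam ^ k + 1) ^ k' - 1) := by
  set x : ℕ := lam ^ k + 1 with hx
  set y : ℕ := x ^ k' with hy
  have hlk : lam + 3 < lam ^ k := by
    calc lam + 3 < 9 * lam := by omega
    _ ≤ lam * lam * lam := by nlinarith
    _ = lam ^ 3 := by ring
    _ ≤ lam ^ k := Nat.pow_le_pow_right (by omega) hk
  have hx2 : 2 ≤ x := by have : 1 ≤ lam ^ k := Nat.one_le_pow _ _ (by omega); omega
  have hy2 : x ≤ y := Nat.le_self_pow (by omega) x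
  have hdiv : ((lam ^ k + 1) ^ (k' * (lam + 2)) - 1) / ((lam ^ k + 1) ^ k' - 1)
      = ∑ j ∈ Finset.range (lam + 2), y ^ j := by
    rw [show (lam ^ k + 1) ^ (k' * (lam + 2)) = y ^ (lam + 2) by
      rw [hy, ← pow_mul, hx],
      ← geom_nat y (by omega) (lam + 2)]
    exact Nat.mul_div_cancel_left _ (by omega)
  rw [hdiv]
  -- mod of RHS
  have hymod : ∀ j : ℕ, y ^ j % lam ^ k = 1 % lam ^ k := by
    intro j
    have : y ^ j ≡ 1 [MOD lam ^ k] := by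
      have : x ≡ 1 [MOD lam ^ k] := by
        simpa [hx, Nat.ModEq] using (Nat.add_mul_mod_self_left 1 (lam ^ k) 1).symm
      simpa using (this.pow k').pow j
    simpa [Nat.ModEq] using this
  have hqmod : (∑ j ∈ Finset.range (lam + 2), y ^ j) % lam ^ k = lam + 2 := by
    rw [Finset.sum_nat_mod]
    have : ∑ j ∈ Finset.range (lam + 2), y ^ j % lam ^ k = (lam + 2) * (1 % lam ^ k) := by
      rw [Finset.sum_congr rfl fun j _ => hymod j, Finset.sum_const, Finset.card_range,
        smul_eq_mul]
    rw [this, Nat.one_mod_eq_one.2 (by omega), Nat.mul_one, Nat.mod_eq_of_lt (by omega)]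
  intro heq
  by_cases hm : k ≤ m
  · -- LHS mod lam^k = lam^k - 1
    have h1 : lam ^ m = lam ^ (m - k) * lam ^ k := by
      rw [← pow_add]; congr 1; omega
    have ha : 1 ≤ lam ^ (m - k) := Nat.one_le_pow _ _ (by omega)
    have hb : lam ^ k ≤ lam ^ (m - k) * lam ^ k :=
      Nat.le_mul_of_pos_left _ ha
    have hdecomp : lam ^ m - 1 = (lam ^ (m - k) - 1) * lam ^ k + (lam ^ k - 1) := by
      rw [Nat.sub_mul, one_mul]; omega
    have hmod : (lam ^ m - 1) % lam ^ k = lam ^ k - 1 := by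
      rw [hdecomp, Nat.add_comm, Nat.add_mul_mod_self_right, Nat.mod_eq_of_lt (by omega)]
    rw [heq, hqmod] at hmod
    omega
  · -- m < k : LHS too small
    have hsmall : lam ^ m < lam ^ k := Nat.pow_lt_pow_right (by omega) (by omega)
    have hge : 1 + y ≤ ∑ j ∈ Finset.range (lam + 2), y ^ j := by
      calc 1 + y = ∑ j ∈ Finset.range 2, y ^ j := by
            simp [Finset.sum_range_succ]
      _ ≤ _ := Finset.sum_le_sum_of_subset (Finset.range_subset_range.2 (by omega))
    omega
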